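/- Under the perturbed elliptic singular vector relations with Ũ_kᵀ M Ũ_k = I_k, Ṽ_kᵀ N Ṽ_k = I_k, and E_uᵀ Ũ_k = 0, the perturbation E_P = E_u Ṽ_kᵀ N − M Ũ_k E_vᵀ satisfies the spectral-norm bound ‖M^{−1/2} E_P N^{−1/2}‖ ≤ √(‖M^{−1/2} E_u‖² + ‖N^{−1/2} E_v‖²); in particular, if ‖M^{−1/2} E_u‖ ≤ ε√k and ‖N^{−1/2} E_v‖ ≤ ε√k, then ‖M^{−1/2} E_P N^{−1/2}‖ ≤ ε√(2k). -/

import Mathlib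

open Matrix
open scoped Matrix.Norms.L2Operator

noncomputable def Matrix.PosSemidef.sqrt {n 𝕜 : Type*} [Fintype n] [DecidableEq n] [RCLike 𝕜]
    [PartialOrder 𝕜] {A : Matrix n n 𝕜} (hA : A.PosSemidef) : Matrix n n 𝕜 :=
  hA.1.eigenvectorUnitary.1 * diagonal ((↑) ∘ (√·) ∘ hA.1.eigenvalues) *
  (star hA.1.eigenvectorUnitary : Matrix n n 𝕜)

private lemma psd_sqrt_mul_self {m : ℕ} {A : Matrix (Fin m) (Fin m) ℝ} (hA : A.PosSemidef) :
    hA.sqrt * hA.sqrt = A := by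
  have hU : (star hA.1.eigenvectorUnitary : Matrix (Fin m) (Fin m) ℝ) *
      hA.1.eigenvectorUnitary.1 = 1 := Unitary.coe_star_mul_self _
  have hD : diagonal ((↑) ∘ (√·) ∘ hA.1.eigenvalues) * diagonal ((↑) ∘ (√·) ∘ hA.1.eigenvalues)
      = diagonal (RCLike.ofReal ∘ hA.1.eigenvalues : Fin m → ℝ) := by
    rw [diagonal_mul_diagonal]
    congr 1; funext i
    simp [Real.mul_self_sqrt (hA.eigenvalues_nonneg i)]
  conv_rhs => rw [hA.1.spectral_theorem]
  rw [Unitary.conjStarAlgAut_apply, Matrix.PosSemidef.sqrt, ← hD]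
  simp only [Matrix.mul_assoc]
  rw [← Matrix.mul_assoc (star _ : Matrix _ _ ℝ) _ _, hU, Matrix.one_mul]
  rfl

private lemma psd_sqrt_transpose {m : ℕ} {A : Matrix (Fin m) (Fin m) ℝ} (hA : A.PosSemidef) :
    hA.sqrtᵀ = hA.sqrt := by
  simp [Matrix.PosSemidef.sqrt, transpose_mul, star_eq_conjTranspose,
    conjTranspose_eq_transpose_of_trivial, Matrix.mul_assoc]

private lemma norm_one_le_aux (k : ℕ) : ‖(1 : Matrix (Fin k) (Fin k) ℝ)‖ ≤ 1 := by
  rcases Nat.eq_zero_or_pos k with h | h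
  · subst h
    simp [Subsingleton.elim (1 : Matrix (Fin 0) (Fin 0) ℝ) 0]
  · haveI : Nonempty (Fin k) := Fin.pos_iff_nonempty.mp h
    rw [CStarRing.norm_one]

private lemma sq_norm_eq (a b : ℕ) (A : Matrix (Fin a) (Fin b) ℝ) :
    ‖Aᵀ * A‖ = ‖A‖ ^ 2 := by
  have := Matrix.l2_opNorm_conjTranspose_mul_self A
  simpa [sq] using this

private lemma norm_transpose_eq (a b : ℕ) (A : Matrix (Fin a) (Fin b) ℝ) :
    ‖Aᵀ‖ = ‖A‖ := by
  have := Matrix.l2_opNorm_conjTranspose A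
  simpa using this

/-- Key abstract bound: if `PᵀP = 1`, `QᵀQ = 1`, `XᵀQ = 0` then
`‖X Pᵀ - Q Yᵀ‖ ≤ √(‖X‖² + ‖Y‖²)`. -/
private lemma key_bound {m n k : ℕ} (X Q : Matrix (Fin m) (Fin k) ℝ)
    (P Y : Matrix (Fin n) (Fin k) ℝ)
    (hP : Pᵀ * P = 1) (hQ : Qᵀ * Q = 1) (hXQ : Xᵀ * Q = 0) :
    ‖X * Pᵀ - Q * Yᵀ‖ ≤ Real.sqrt (‖X‖ ^ 2 + ‖Y‖ ^ 2) := by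
  set T : Matrix (Fin m) (Fin n) ℝ := X * Pᵀ - Q * Yᵀ with hT
  have hQX : Qᵀ * X = 0 := by
    have := congrArg Matrix.transpose hXQ
    simpa using this
  have hTT : Tᵀ * T = P * (Xᵀ * X) * Pᵀ + Y * Yᵀ := by
    have hTtr : Tᵀ = P * Xᵀ - Y * Qᵀ := by
      simp [hT, Matrix.transpose_sub, Matrix.transpose_mul]
    rw [hTtr, hT]
    have expand : (P * Xᵀ - Y * Qᵀ) * (X * Pᵀ - Q * Yᵀ)
        = P * (Xᵀ * X) * Pᵀ - P * (Xᵀ * Q) * Yᵀ - Y * (Qᵀ * X) * Pᵀ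
          + Y * (Qᵀ * Q) * Yᵀ := by
      simp only [Matrix.sub_mul, Matrix.mul_sub, Matrix.mul_assoc]
      abel
    rw [expand, hXQ, hQX, hQ]
    simp [Matrix.mul_zero, Matrix.zero_mul, Matrix.mul_one]
  -- norm of P is at most 1
  have hPn : ‖P‖ ≤ 1 := by
    have h1 : ‖P‖ ^ 2 = ‖(1 : Matrix (Fin k) (Fin k) ℝ)‖ := by
      rw [← hP, sq_norm_eq]
    nlinarith [norm_one_le_aux k, norm_nonneg P, h1]
  have hPtn : ‖Pᵀ‖ ≤ 1 := by rw [norm_transpose_eq]; exact hPn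
  -- bound on ‖TᵀT‖
  have hmid : ‖P * (Xᵀ * X) * Pᵀ‖ ≤ ‖X‖ ^ 2 := by
    have s1 : ‖P * (Xᵀ * X) * Pᵀ‖ ≤ ‖P‖ * ‖Xᵀ * X‖ * ‖Pᵀ‖ := by
      calc ‖P * (Xᵀ * X) * Pᵀ‖ ≤ ‖P * (Xᵀ * X)‖ * ‖Pᵀ‖ := Matrix.l2_opNorm_mul _ _
        _ ≤ ‖P‖ * ‖Xᵀ * X‖ * ‖Pᵀ‖ := by
            have := Matrix.l2_opNorm_mul P (Xᵀ * X)
            exact mul_le_mul_of_nonneg_right this (norm_nonneg _)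
    have s2 : ‖P‖ * ‖Xᵀ * X‖ * ‖Pᵀ‖ ≤ 1 * ‖Xᵀ * X‖ * 1 :=
      mul_le_mul (mul_le_mul hPn le_rfl (norm_nonneg _) zero_le_one) hPtn
        (norm_nonneg _) (by positivity)
    calc ‖P * (Xᵀ * X) * Pᵀ‖ ≤ 1 * ‖Xᵀ * X‖ * 1 := le_trans s1 s2
      _ = ‖X‖ ^ 2 := by rw [sq_norm_eq]; ring
  have hYY : ‖Y * Yᵀ‖ ≤ ‖Y‖ ^ 2 := by
    have : ‖Y * Yᵀ‖ = ‖Yᵀ‖ ^ 2 := by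
      have := sq_norm_eq _ _ Yᵀ
      simpa using this
    rw [this, norm_transpose_eq]
  have h2 : ‖Tᵀ * T‖ ≤ ‖X‖ ^ 2 + ‖Y‖ ^ 2 := by
    rw [hTT]
    calc ‖P * (Xᵀ * X) * Pᵀ + Y * Yᵀ‖
        ≤ ‖P * (Xᵀ * X) * Pᵀ‖ + ‖Y * Yᵀ‖ := norm_add_le _ _
      _ ≤ ‖X‖ ^ 2 + ‖Y‖ ^ 2 := add_le_add hmid hYY
  have h3 : ‖T‖ ^ 2 ≤ ‖X‖ ^ 2 + ‖Y‖ ^ 2 := by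
    rw [← sq_norm_eq _ _ T]; exact h2
  calc ‖T‖ = Real.sqrt (‖T‖ ^ 2) := by rw [Real.sqrt_sq (norm_nonneg T)]
    _ ≤ Real.sqrt (‖X‖ ^ 2 + ‖Y‖ ^ 2) := Real.sqrt_le_sqrt h3

/-- Under the perturbed elliptic singular vector relations with `Ũ_kᵀ M Ũ_k = I_k`,
`Ṽ_kᵀ N Ṽ_k = I_k`, and `E_uᵀ Ũ_k = 0`, the perturbation
`E_P = E_u Ṽ_kᵀ N − M Ũ_k E_vᵀ` satisfies the spectral-norm bound
`‖M^{−1/2} E_P N^{−1/2}‖ ≤ √(‖M^{−1/2} E_u‖² + ‖N^{−1/2} E_v‖²)`; in particular, if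
`‖M^{−1/2} E_u‖ ≤ ε√k` and `‖N^{−1/2} E_v‖ ≤ ε√k`, then
`‖M^{−1/2} E_P N^{−1/2}‖ ≤ ε√(2k)`. -/
theorem perturbation_spectral_norm_bound (m n k : ℕ)
    (M : Matrix (Fin m) (Fin m) ℝ) (N : Matrix (Fin n) (Fin n) ℝ)
    (A : Matrix (Fin m) (Fin n) ℝ)
    (hM : M.PosDef) (hN : N.PosDef)
    (Uk : Matrix (Fin m) (Fin k) ℝ) (Vk : Matrix (Fin n) (Fin k) ℝ)
    (Sigt : Matrix (Fin k) (Fin k) ℝ)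
    (hSigDiag : ∀ i j, i ≠ j → Sigt i j = 0)
    (Eu : Matrix (Fin m) (Fin k) ℝ) (Ev : Matrix (Fin n) (Fin k) ℝ)
    (hAV : A * Vk = M * Uk * Sigt + Eu) (hAU : Aᵀ * Uk = N * Vk * Sigt + Ev)
    (hUk : Ukᵀ * M * Uk = 1) (hVk : Vkᵀ * N * Vk = 1)
    (hEuUk : Euᵀ * Uk = 0)
    (EP : Matrix (Fin m) (Fin n) ℝ) (hEP : EP = Eu * Vkᵀ * N - M * Uk * Evᵀ)
    (Mih : Matrix (Fin m) (Fin m) ℝ) (hMih : Mih = (hM.posSemidef.sqrt)⁻¹)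
    (Nih : Matrix (Fin n) (Fin n) ℝ) (hNih : Nih = (hN.posSemidef.sqrt)⁻¹) :
    ‖Mih * EP * Nih‖ ≤ Real.sqrt (‖Mih * Eu‖ ^ 2 + ‖Nih * Ev‖ ^ 2) ∧
      ∀ ε : ℝ, ‖Mih * Eu‖ ≤ ε * Real.sqrt k → ‖Nih * Ev‖ ≤ ε * Real.sqrt k →
        ‖Mih * EP * Nih‖ ≤ ε * Real.sqrt (2 * k) := by
  set SM : Matrix (Fin m) (Fin m) ℝ := hM.posSemidef.sqrt with hSM
  set SN : Matrix (Fin n) (Fin n) ℝ := hN.posSemidef.sqrt with hSN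
  have hSMsq : SM * SM = M := psd_sqrt_mul_self hM.posSemidef
  have hSNsq : SN * SN = N := psd_sqrt_mul_self hN.posSemidef
  -- symmetry of the square roots
  have hSMt : SMᵀ = SM := by
    have := psd_sqrt_transpose hM.posSemidef
    simpa [Matrix.IsHermitian] using this
  have hSNt : SNᵀ = SN := by
    have := psd_sqrt_transpose hN.posSemidef
    simpa [Matrix.IsHermitian] using this
  -- invertibility
  have hSMunit : IsUnit SM.det := by
    have hdM : SM.det * SM.det = M.det := by rw [← Matrix.det_mul, hSMsq]
    have hne : SM.det ≠ 0 := by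
      intro h
      rw [h, mul_zero] at hdM
      exact hM.det_pos.ne' hdM.symm
    exact hne.isUnit
  have hSNunit : IsUnit SN.det := by
    have hdN : SN.det * SN.det = N.det := by rw [← Matrix.det_mul, hSNsq]
    have hne : SN.det ≠ 0 := by
      intro h
      rw [h, mul_zero] at hdN
      exact hN.det_pos.ne' hdN.symm
    exact hne.isUnit
  have hMihSM : Mih * SM = 1 := by rw [hMih]; exact Matrix.nonsing_inv_mul _ hSMunit
  have hSNNih : SN * Nih = 1 := by rw [hNih]; exact Matrix.mul_nonsing_inv _ hSNunit
  have hMiht : Mihᵀ = Mih := by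
    rw [hMih, Matrix.transpose_nonsing_inv, hSMt]
  have hNiht : Nihᵀ = Nih := by
    rw [hNih, Matrix.transpose_nonsing_inv, hSNt]
  have hNNih : N * Nih = SN := by
    rw [← hSNsq, Matrix.mul_assoc, hSNNih, Matrix.mul_one]
  have hMihM : Mih * M = SM := by
    rw [← hSMsq, ← Matrix.mul_assoc, hMihSM, Matrix.one_mul]
  set X : Matrix (Fin m) (Fin k) ℝ := Mih * Eu with hX
  set Q : Matrix (Fin m) (Fin k) ℝ := SM * Uk with hQ
  set P : Matrix (Fin n) (Fin k) ℝ := SN * Vk with hPd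
  set Y : Matrix (Fin n) (Fin k) ℝ := Nih * Ev with hY
  -- rewrite the central matrix
  have term1 : Mih * (Eu * Vkᵀ * N) * Nih = X * Pᵀ := by
    rw [hX, hPd, Matrix.transpose_mul, hSNt]
    simp only [Matrix.mul_assoc, hNNih]
  have term2 : Mih * (M * Uk * Evᵀ) * Nih = Q * Yᵀ := by
    have e : Mih * (M * Uk * Evᵀ) * Nih = (Mih * M) * (Uk * (Evᵀ * Nih)) := by
      simp only [Matrix.mul_assoc]
    rw [e, hMihM, hQ, hY, Matrix.transpose_mul, hNiht]
    simp only [Matrix.mul_assoc]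
  have hMain : Mih * EP * Nih = X * Pᵀ - Q * Yᵀ := by
    rw [hEP]
    have e : Mih * (Eu * Vkᵀ * N - M * Uk * Evᵀ) * Nih
        = Mih * (Eu * Vkᵀ * N) * Nih - Mih * (M * Uk * Evᵀ) * Nih := by
      simp only [Matrix.mul_sub, Matrix.sub_mul]
    rw [e, term1, term2]
  -- the hypotheses of the key bound
  have hPP : Pᵀ * P = 1 := by
    rw [hPd, Matrix.transpose_mul, hSNt]
    have e : Vkᵀ * SN * (SN * Vk) = Vkᵀ * (SN * SN) * Vk := by
      simp only [Matrix.mul_assoc]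
    rw [e, hSNsq]; exact hVk
  have hQQ : Qᵀ * Q = 1 := by
    rw [hQ, Matrix.transpose_mul, hSMt]
    have e : Ukᵀ * SM * (SM * Uk) = Ukᵀ * (SM * SM) * Uk := by
      simp only [Matrix.mul_assoc]
    rw [e, hSMsq]; exact hUk
  have hXQ : Xᵀ * Q = 0 := by
    rw [hX, hQ, Matrix.transpose_mul, hMiht]
    have e : Euᵀ * Mih * (SM * Uk) = Euᵀ * (Mih * SM) * Uk := by
      simp only [Matrix.mul_assoc]
    rw [e, hMihSM, Matrix.mul_one]; exact hEuUk
  have hbound := key_bound X Q P Y hPP hQQ hXQ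
  rw [hMain]
  refine ⟨hbound, fun ε hXe hYe => ?_⟩
  have hc : (0 : ℝ) ≤ ε * Real.sqrt k := le_trans (norm_nonneg X) hXe
  have h1 : ‖X‖ ^ 2 + ‖Y‖ ^ 2 ≤ 2 * (ε * Real.sqrt k) ^ 2 := by
    nlinarith [norm_nonneg X, norm_nonneg Y]
  have h2 : Real.sqrt (‖X‖ ^ 2 + ‖Y‖ ^ 2) ≤ ε * Real.sqrt (2 * k) := by
    have h3 : Real.sqrt (2 * (ε * Real.sqrt k) ^ 2)
        = Real.sqrt 2 * (ε * Real.sqrt k) := by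
      rw [Real.sqrt_mul (by norm_num : (0:ℝ) ≤ 2), Real.sqrt_sq hc]
    calc Real.sqrt (‖X‖ ^ 2 + ‖Y‖ ^ 2)
        ≤ Real.sqrt (2 * (ε * Real.sqrt k) ^ 2) := Real.sqrt_le_sqrt h1
      _ = Real.sqrt 2 * (ε * Real.sqrt k) := h3
      _ = ε * Real.sqrt (2 * k) := by
          rw [Real.sqrt_mul (by norm_num : (0:ℝ) ≤ 2)]; ring
  exact le_trans hbound h2
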